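/- Let S be a finite nonempty set. For φ ∈ ℝ^S and λ ∈ ℝ, let H_{φ,λ} = { p ∈ Δ(S) : E_p[φ] ≥ λ }. Let 𝒫 be a nonempty Hausdorff-compact collection of nonempty compact convex subsets of Δ(S), and define its half-space closure as the Hausdorff closure of { H : H is a nonempty closed half-space of Δ(S) and P ⊆ H for some P ∈ 𝒫 }. Then for all φ ∈ ℝ^S and λ ∈ ℝ with H_{φ,λ} nonempty: H_{φ,λ} belongs to the half-space closure of 𝒫 if and only if max_{P∈𝒫} min_{p∈P} E_p[φ] ≥ λ, where membership P ⊆ H_{φ,λ} for some P ∈ 𝒫 is taken before closure and may be relaxed up to Hausdorff limits. -/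

import Mathlib

open Set

noncomputable section

def simplex (S : Type*) [Fintype S] : Set (S → ℝ) :=
  {p | (∀ s, 0 ≤ p s) ∧ ∑ s, p s = 1}

def expE {S : Type*} [Fintype S] (p φ : S → ℝ) : ℝ := ∑ s, p s * φ s

def minEU {S : Type*} [Fintype S] (P : Set (S → ℝ)) (φ : S → ℝ) : ℝ :=
  sInf ((fun p => expE p φ) '' P)

def maxEU {S : Type*} [Fintype S] (P : Set (S → ℝ)) (φ : S → ℝ) : ℝ :=
  sSup ((fun p => expE p φ) '' P)

def maxmin {S : Type*} [Fintype S] (C : Set (Set (S → ℝ))) (φ : S → ℝ) : ℝ :=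
  sSup ((fun P => minEU P φ) '' C)

def minmax {S : Type*} [Fintype S] (C : Set (Set (S → ℝ))) (φ : S → ℝ) : ℝ :=
  sInf ((fun P => maxEU P φ) '' C)

abbrev Dl (S : Type*) [Fintype S] := {p : S → ℝ // p ∈ simplex S}

def halfSpace {S : Type*} [Fintype S] (ψ : S → ℝ) (μ : ℝ) : Set (Dl S) :=
  {p : Dl S | μ ≤ expE p.1 ψ}

/-- The collection of closed half-spaces of Δ(S) containing some member of C. -/
def hsColl {S : Type*} [Fintype S]
    (C : Set (TopologicalSpace.NonemptyCompacts (Dl S))) :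
    Set (TopologicalSpace.NonemptyCompacts (Dl S)) :=
  {H | (∃ ψ μ, (H : Set (Dl S)) = halfSpace ψ μ) ∧
        ∃ P ∈ C, (P : Set (Dl S)) ⊆ (H : Set (Dl S))}


open Metric TopologicalSpace Filter

theorem simplex_isCompact (S : Type*) [Fintype S] : IsCompact (simplex S) := by
  have h1 : IsCompact (Set.pi univ fun _ : S => Icc (0:ℝ) 1) :=
    isCompact_univ_pi fun _ => isCompact_Icc
  refine h1.of_isClosed_subset ?_ ?_
  · have : simplex S = {p : S → ℝ | ∀ s, 0 ≤ p s} ∩ {p | ∑ s, p s = 1} := rfl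
    rw [this]
    refine IsClosed.inter ?_ ?_
    · have : {p : S → ℝ | ∀ s, 0 ≤ p s} = ⋂ s, {p : S → ℝ | 0 ≤ p s} := by
        ext p; simp
      rw [this]
      exact isClosed_iInter fun s => isClosed_le continuous_const (continuous_apply s)
    · exact isClosed_eq (continuous_finset_sum _ fun s _ => continuous_apply s) continuous_const
  · rintro p ⟨h0, h1⟩ s _
    refine ⟨h0 s, ?_⟩
    calc p s ≤ ∑ t, p t := Finset.single_le_sum (fun t _ => h0 t) (Finset.mem_univ s)
    _ = 1 := h1

instance (S : Type*) [Fintype S] : CompactSpace (Dl S) :=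
  isCompact_iff_compactSpace.mp (simplex_isCompact S)

theorem expE_cont {S : Type*} [Fintype S] (φ : S → ℝ) :
    Continuous fun p : Dl S => expE p.1 φ := by
  unfold expE
  exact continuous_finset_sum _ fun s _ =>
    (((continuous_apply s).comp continuous_subtype_val).mul continuous_const)

theorem halfSpace_isClosed {S : Type*} [Fintype S] (ψ : S → ℝ) (μ : ℝ) :
    IsClosed (halfSpace ψ μ) :=
  isClosed_le continuous_const (expE_cont ψ)

theorem expE_le_sup' {S : Type*} [Fintype S] [Nonempty S] (φ : S → ℝ) (p : Dl S) :
    expE p.1 φ ≤ Finset.univ.sup' Finset.univ_nonempty φ := by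
  unfold expE
  calc ∑ s, p.1 s * φ s ≤ ∑ s, p.1 s * Finset.univ.sup' Finset.univ_nonempty φ := by
        refine Finset.sum_le_sum fun s _ => ?_
        exact mul_le_mul_of_nonneg_left (Finset.le_sup' φ (Finset.mem_univ s)) (p.2.1 s)
  _ = 1 * Finset.univ.sup' Finset.univ_nonempty φ := by rw [← Finset.sum_mul, p.2.2]
  _ = _ := one_mul _

/-- Key approximation lemma: the half-spaces H_{φ, l-δ} Hausdorff-approximate H_{φ,l}. -/
theorem approx {S : Type*} [Fintype S] (φ : S → ℝ) (l : ℝ)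
    (hH : (halfSpace φ l).Nonempty) :
    ∀ ε > 0, ∃ δ > 0, ∀ q ∈ halfSpace φ (l - δ),
      Metric.infDist q (halfSpace φ l) < ε := by
  intro ε hε
  by_contra h
  push_neg at h
  choose q hq1 hq2 using fun n : ℕ => h (1 / (n + 1)) (by positivity)
  obtain ⟨x, -, g, hg, hx⟩ := isCompact_univ.tendsto_subseq (fun n => mem_univ (q n))
  have hxl : x ∈ halfSpace φ l := by
    have h1 : Filter.Tendsto (fun n => expE (q (g n)).1 φ) Filter.atTop
        (nhds (expE x.1 φ)) := ((expE_cont φ).tendsto x).comp hx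
    have h2 : Filter.Tendsto (fun n : ℕ => l - 1 / (g n + 1)) Filter.atTop (nhds l) := by
      have := (tendsto_one_div_add_atTop_nhds_zero_nat :
        Filter.Tendsto (fun n : ℕ => 1 / ((n : ℝ) + 1)) Filter.atTop (nhds 0)).comp hg.tendsto_atTop
      have : Filter.Tendsto (fun n : ℕ => l - 1 / (g n + 1)) Filter.atTop (nhds (l - 0)) :=
        tendsto_const_nhds.sub this
      simpa using this
    exact le_of_tendsto_of_tendsto' h2 h1 fun n => hq1 (g n)
  have h3 : Filter.Tendsto (fun n => Metric.infDist (q (g n)) (halfSpace φ l))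
      Filter.atTop (nhds (Metric.infDist x (halfSpace φ l))) :=
    ((Metric.continuous_infDist_pt _).tendsto x).comp hx
  have h4 : ε ≤ Metric.infDist x (halfSpace φ l) :=
    le_of_tendsto_of_tendsto' tendsto_const_nhds h3 fun n => hq2 (g n)
  rw [Metric.infDist_zero_of_mem hxl] at h4
  linarith


/-- H_{φ,λ} lies in the half-space closure of 𝒫 iff
max_{P∈𝒫} min_{p∈P} E_p[φ] ≥ λ. -/
theorem stmt16 {S : Type*} [Fintype S] [Nonempty S]
    (C : Set (TopologicalSpace.NonemptyCompacts (Dl S)))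
    (hne : C.Nonempty) (hcomp : IsCompact C)
    (hmem : ∀ P ∈ C, Convex ℝ (Subtype.val '' (P : Set (Dl S))))
    (φ : S → ℝ) (l : ℝ) (hH : (halfSpace φ l).Nonempty) :
    (∃ H ∈ closure (hsColl C), (H : Set (Dl S)) = halfSpace φ l)
      ↔ l ≤ sSup ((fun P : TopologicalSpace.NonemptyCompacts (Dl S) =>
          sInf ((fun p : Dl S => expE p.1 φ) '' (P : Set (Dl S)))) '' C) := by
  have hfin : ∀ (A B : NonemptyCompacts (Dl S)),
      EMetric.hausdorffEdist (A : Set (Dl S)) (B : Set (Dl S)) ≠ ⊤ := fun A B =>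
    Metric.hausdorffEdist_ne_top_of_nonempty_of_bounded A.nonempty B.nonempty
      A.isCompact.isBounded B.isCompact.isBounded
  have hbdd : BddAbove ((fun P : TopologicalSpace.NonemptyCompacts (Dl S) =>
      sInf ((fun p : Dl S => expE p.1 φ) '' (P : Set (Dl S)))) '' C) := by
    refine ⟨Finset.univ.sup' Finset.univ_nonempty φ, ?_⟩
    rintro y ⟨P, hPC, rfl⟩
    obtain ⟨p, hp⟩ := P.nonempty
    calc sInf ((fun p : Dl S => expE p.1 φ) '' (P : Set (Dl S))) ≤ expE p.1 φ :=
          csInf_le (P.isCompact.image (expE_cont φ)).bddBelow (mem_image_of_mem _ hp)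
    _ ≤ _ := expE_le_sup' φ p
  constructor
  · rintro ⟨H, hHcl, hHeq⟩
    obtain ⟨u, hu, hulim⟩ := mem_closure_iff_seq_limit.mp hHcl
    choose P hPC hPsub using fun n => (hu n).2
    obtain ⟨Q, hQC, g, hg, hQlim⟩ := hcomp.tendsto_subseq hPC
    have key : (Q : Set (Dl S)) ⊆ halfSpace φ l := by
      intro x hx
      have hb : ∀ n, Metric.infDist x (H : Set (Dl S)) ≤
          dist Q (P (g n)) + dist (u (g n)) H := by
        intro n
        calc infDist x (H : Set (Dl S))
            ≤ infDist x (u (g n) : Set (Dl S)) +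
              hausdorffDist (u (g n) : Set (Dl S)) (H : Set (Dl S)) :=
              infDist_le_infDist_add_hausdorffDist (hfin _ _)
        _ ≤ infDist x (P (g n) : Set (Dl S)) +
              hausdorffDist (u (g n) : Set (Dl S)) (H : Set (Dl S)) :=
              add_le_add
                (infDist_le_infDist_of_subset (hPsub (g n)) (P (g n)).nonempty) le_rfl
        _ ≤ hausdorffDist (Q : Set (Dl S)) (P (g n) : Set (Dl S)) +
              hausdorffDist (u (g n) : Set (Dl S)) (H : Set (Dl S)) :=
              add_le_add (infDist_le_hausdorffDist_of_mem hx (hfin _ _)) le_rfl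
        _ = dist Q (P (g n)) + dist (u (g n)) H := by
              rw [NonemptyCompacts.dist_eq, NonemptyCompacts.dist_eq]
      have hlim0 : Tendsto (fun n => dist Q (P (g n)) + dist (u (g n)) H)
          atTop (nhds 0) := by
        have h1 : Tendsto (fun n => dist Q (P (g n))) atTop (nhds 0) := by
          have := tendsto_iff_dist_tendsto_zero.mp hQlim
          simpa [dist_comm] using this
        have h2 : Tendsto (fun n => dist (u (g n)) H) atTop (nhds 0) := by
          have := tendsto_iff_dist_tendsto_zero.mp (hulim.comp hg.tendsto_atTop)
          simpa using this
        simpa using h1.add h2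
      have h0 : Metric.infDist x (H : Set (Dl S)) ≤ 0 := ge_of_tendsto' hlim0 hb
      have h0' : Metric.infDist x (halfSpace φ l) = 0 := by
        rw [← hHeq]; exact le_antisymm h0 infDist_nonneg
      exact ((halfSpace_isClosed φ l).mem_iff_infDist_zero hH).mpr h0'
    have h1 : l ≤ sInf ((fun p : Dl S => expE p.1 φ) '' (Q : Set (Dl S))) := by
      refine le_csInf (Q.nonempty.image _) ?_
      rintro b ⟨p, hp, rfl⟩
      exact key hp
    exact h1.trans (le_csSup hbdd (mem_image_of_mem _ hQC))
  · intro hle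
    refine ⟨⟨⟨halfSpace φ l, (halfSpace_isClosed φ l).isCompact⟩, hH⟩, ?_, rfl⟩
    rw [Metric.mem_closure_iff]
    intro ε hε
    obtain ⟨δ, hδ, hδ2⟩ := approx φ l hH (ε / 2) (by linarith)
    have hlt : l - δ < sSup ((fun P : TopologicalSpace.NonemptyCompacts (Dl S) =>
        sInf ((fun p : Dl S => expE p.1 φ) '' (P : Set (Dl S)))) '' C) := by linarith
    obtain ⟨y, hyC, hy⟩ := exists_lt_of_lt_csSup (hne.image _) hlt
    obtain ⟨P, hPC, rfl⟩ := hyC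
    have hsub : halfSpace φ l ⊆ halfSpace φ (l - δ) := fun p hp => by
      simp only [halfSpace, mem_setOf_eq] at *; linarith
    refine ⟨⟨⟨halfSpace φ (l - δ), (halfSpace_isClosed _ _).isCompact⟩, hH.mono hsub⟩,
      ⟨⟨φ, l - δ, rfl⟩, P, hPC, ?_⟩, ?_⟩
    · intro p hp
      have : l - δ < expE p.1 φ :=
        lt_of_lt_of_le hy (csInf_le (P.isCompact.image (expE_cont φ)).bddBelow
          (mem_image_of_mem _ hp))
      exact this.le
    · rw [NonemptyCompacts.dist_eq]
      have : hausdorffDist (halfSpace φ l) (halfSpace φ (l - δ)) ≤ ε / 2 := by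
        refine hausdorffDist_le_of_infDist (by linarith) ?_ ?_
        · intro x hx
          rw [infDist_zero_of_mem (hsub hx)]; linarith
        · intro y hy'
          exact (hδ2 y hy').le
      exact lt_of_le_of_lt this (by linarith)
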